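/- arXiv:2306.12250 — 2 statements merged into one kernel-verified Lean document; each statement's English description precedes it below -/
import Mathlib

section
/- If every point of a poset P is G-isolated for a finite family G of upsets (i.e., x ∼^G_ω y implies x = y), and P is finite, then two distinct points of P are separated by some term-definable upset generated from G using intersection, union, and Heyting implication of upsets. -/
/-- The bisimulation-style relations `∼^G_n` on a preordered set, relative to a
family `G` of subsets. -/
def simRel {α : Type*} [Preorder α] (G : Set (Set α)) : ℕ → α → α → Prop
  | 0 => fun x y => ∀ g ∈ G, (x ∈ g ↔ y ∈ g)
  | n + 1 => fun x y =>
      (∀ z, x ≤ z → ∃ w, y ≤ w ∧ simRel G n z w) ∧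
      (∀ w, y ≤ w → ∃ z, x ≤ z ∧ simRel G n z w)


/-- Heyting implication of subsets of a poset: `U → V = (↓(U \ V))ᶜ`,
equivalently the set of points all of whose successors in `U` lie in `V`. -/
def himpSet {α : Type*} [Preorder α] (U V : Set α) : Set α :=
  {x | ∀ y, x ≤ y → y ∈ U → y ∈ V}

/-- Membership in the Heyting subalgebra of `Up(P)` generated by `G`:
the closure of `G` under `∅`, `univ`, intersection, union and Heyting
implication of upsets. -/
inductive HGen {α : Type*} [Preorder α] (G : Set (Set α)) : Set α → Prop
  | base {U : Set α} : U ∈ G → HGen G U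
  | bot : HGen G ∅
  | top : HGen G Set.univ
  | inf {U V : Set α} : HGen G U → HGen G V → HGen G (U ∩ V)
  | sup {U V : Set α} : HGen G U → HGen G V → HGen G (U ∪ V)
  | himp {U V : Set α} : HGen G U → HGen G V → HGen G (himpSet U V)


lemma simRel_symm {α : Type*} [Preorder α] {G : Set (Set α)} :
    ∀ {n : ℕ} {x y : α}, simRel G n x y → simRel G n y x := by
  intro n
  induction n with
  | zero => intro x y h g hg; exact (h g hg).symm
  | succ n IH =>
    intro x y h
    exact ⟨fun z hz => (h.2 z hz).imp fun w hw => ⟨hw.1, IH hw.2⟩,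
           fun w hw => (h.1 w hw).imp fun z hz => ⟨hz.1, IH hz.2⟩⟩

open Classical in
lemma HGen.finInter {α : Type*} [Preorder α] {G : Set (Set α)}
    (s : Finset α) (f : α → Set α) (hf : ∀ b ∈ s, HGen G (f b)) :
    HGen G (⋂ b ∈ s, f b) := by
  classical
  induction s using Finset.induction with
  | empty => simpa using HGen.top
  | insert a s ha ih =>
    rw [Finset.set_biInter_insert]
    exact HGen.inf (hf _ (Finset.mem_insert_self _ _))
      (ih fun b hb => hf b (Finset.mem_insert_of_mem hb))

open Classical in
lemma HGen.finUnion {α : Type*} [Preorder α] {G : Set (Set α)}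
    (s : Finset α) (f : α → Set α) (hf : ∀ b ∈ s, HGen G (f b)) :
    HGen G (⋃ b ∈ s, f b) := by
  classical
  induction s using Finset.induction with
  | empty => simpa using HGen.bot
  | insert a s ha ih =>
    rw [Finset.set_biUnion_insert]
    exact HGen.sup (hf _ (Finset.mem_insert_self _ _))
      (ih fun b hb => hf b (Finset.mem_insert_of_mem hb))

/-- Key one-sided step of the induction. -/
lemma key_step {α : Type*} [PartialOrder α] [Finite α] {G : Set (Set α)} {n : ℕ}
    (IH : ∀ x y : α, ¬ simRel G n x y →
      ∃ U : Set α, HGen G U ∧ ((x ∈ U ∧ y ∉ U) ∨ (y ∈ U ∧ x ∉ U)))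
    {x y z : α} (hxz : x ≤ z) (hz : ∀ w, y ≤ w → ¬ simRel G n z w) :
    ∃ U : Set α, HGen G U ∧ y ∈ U ∧ x ∉ U := by
  classical
  -- choose separating sets
  have hsep : ∀ w : α, y ≤ w →
      ∃ U : Set α, HGen G U ∧ ((z ∈ U ∧ w ∉ U) ∨ (w ∈ U ∧ z ∉ U)) :=
    fun w hw => IH z w (hz w hw)
  choose! f hf1 hf2 using hsep
  have : Fintype α := Fintype.ofFinite α
  let S : Finset α := Finset.univ.filter (fun w => y ≤ w)
  let W1 : Finset α := S.filter (fun w => z ∈ f w ∧ w ∉ f w)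
  let W2 : Finset α := S.filter (fun w => w ∈ f w ∧ z ∉ f w)
  let A : Set α := ⋂ w ∈ W1, f w
  let B : Set α := ⋃ w ∈ W2, f w
  refine ⟨himpSet A B, HGen.himp ?_ ?_, ?_, ?_⟩
  · exact HGen.finInter _ _ fun b hb => by
      have hb' := Finset.mem_filter.mp hb
      exact hf1 b (by simpa [S] using Finset.mem_filter.mp hb'.1 |>.2)
  · exact HGen.finUnion _ _ fun b hb => by
      have hb' := Finset.mem_filter.mp hb
      exact hf1 b (by simpa [S] using Finset.mem_filter.mp hb'.1 |>.2)
  · -- y ∈ himpSet A B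
    intro w hw hwA
    have hwS : w ∈ S := by simp [S, hw]
    rcases hf2 w hw with ⟨hz1, hw1⟩ | ⟨hw2, hz2⟩
    · exact absurd (Set.mem_iInter₂.mp hwA w (Finset.mem_filter.mpr ⟨hwS, hz1, hw1⟩)) hw1
    · exact Set.mem_iUnion₂.mpr ⟨w, Finset.mem_filter.mpr ⟨hwS, hw2, hz2⟩, hw2⟩
  · -- x ∉ himpSet A B
    intro hx
    have hzA : z ∈ A := Set.mem_iInter₂.mpr fun w hw =>
      (Finset.mem_filter.mp hw).2.1
    have hzB : z ∈ B := hx z hxz hzA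
    rcases Set.mem_iUnion₂.mp hzB with ⟨w, hw, hzw⟩
    exact (Finset.mem_filter.mp hw).2.2 hzw

lemma sep_of_not_simRel {α : Type*} [PartialOrder α] [Finite α] {G : Set (Set α)} :
    ∀ (n : ℕ) (x y : α), ¬ simRel G n x y →
      ∃ U : Set α, HGen G U ∧ ((x ∈ U ∧ y ∉ U) ∨ (y ∈ U ∧ x ∉ U)) := by
  intro n
  induction n with
  | zero =>
    intro x y h
    simp only [simRel, not_forall] at h
    obtain ⟨g, hg, hxy⟩ := h
    rcases Classical.em (x ∈ g) with hx | hx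
    · exact ⟨g, HGen.base hg, Or.inl ⟨hx, fun hy => hxy ⟨fun _ => hy, fun _ => hx⟩⟩⟩
    · refine ⟨g, HGen.base hg, Or.inr ⟨?_, hx⟩⟩
      by_contra hy
      exact hxy ⟨fun h' => absurd h' hx, fun h' => absurd h' hy⟩
  | succ n IH =>
    intro x y h
    simp only [simRel, not_and_or, not_forall] at h
    rcases h with ⟨z, hxz, hz⟩ | ⟨w, hyw, hw⟩
    · push_neg at hz
      obtain ⟨U, hU, hyU, hxU⟩ := key_step IH hxz hz
      exact ⟨U, hU, Or.inr ⟨hyU, hxU⟩⟩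
    · push_neg at hw
      obtain ⟨U, hU, hxU, hyU⟩ := key_step IH hyw
        (fun z hz hsim => hw z hz (simRel_symm hsim))
      exact ⟨U, hU, Or.inl ⟨hxU, hyU⟩⟩

/-- If every point of a finite poset `P` is `G`-isolated for a finite family
`G` of upsets, then any two distinct points are separated by some upset in the
Heyting subalgebra generated by `G`. -/
theorem separation_of_isolated {α : Type*} [PartialOrder α] [Finite α]
    (G : Set (Set α)) (hG : ∀ g ∈ G, IsUpperSet g) (hGfin : G.Finite)
    (hiso : ∀ x y : α, (∀ n, simRel G n x y) → x = y) :
    ∀ x y : α, x ≠ y →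
      ∃ U : Set α, HGen G U ∧ ((x ∈ U ∧ y ∉ U) ∨ (y ∈ U ∧ x ∉ U)) := by
  intro x y hxy
  have : ¬ ∀ n, simRel G n x y := fun h => hxy (hiso x y h)
  push_neg at this
  obtain ⟨n, hn⟩ := this
  exact sep_of_not_simRel n x y hn
end

section
/- Let L be a finite algebraic signature and V a variety of L-algebras. If every k-generated algebra in V is finite, then there is a uniform bound N such that every k-generated algebra in V has cardinality at most N, and hence V contains only finitely many k-generated algebras up to isomorphism. -/
/-- An algebra for the signature given by operation symbols `L` with arities `ar`. -/
structure Alg (L : Type) (ar : L → ℕ) where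
  carrier : Type
  op : ∀ f : L, (Fin (ar f) → carrier) → carrier

namespace Alg

variable {L : Type} {ar : L → ℕ}

/-- A subset closed under all the operations. -/
def ClosedUnder (A : Alg L ar) (S : Set A.carrier) : Prop :=
  ∀ (f : L) (args : Fin (ar f) → A.carrier), (∀ i, args i ∈ S) → A.op f args ∈ S

/-- Membership in the subalgebra generated by `S`. -/
inductive Closure (A : Alg L ar) (S : Set A.carrier) : A.carrier → Prop
  | base {x : A.carrier} : x ∈ S → Closure A S x
  | op (f : L) (args : Fin (ar f) → A.carrier) :
      (∀ i, Closure A S (args i)) → Closure A S (A.op f args)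

/-- Homomorphisms of algebras. -/
structure Hom (A B : Alg L ar) where
  toFun : A.carrier → B.carrier
  map_op : ∀ (f : L) (args : Fin (ar f) → A.carrier),
    toFun (A.op f args) = B.op f fun i => toFun (args i)

/-- Isomorphism of algebras. -/
def Iso (A B : Alg L ar) : Prop :=
  ∃ e : A.carrier ≃ B.carrier,
    ∀ (f : L) (args : Fin (ar f) → A.carrier),
      e (A.op f args) = B.op f fun i => e (args i)

/-- The product algebra of a family of algebras. -/
def prodAlg (ι : Type) (A : ι → Alg L ar) : Alg L ar where
  carrier := ∀ i, (A i).carrier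
  op f args i := (A i).op f fun j => args j i

/-- The binary product algebra. -/
def prod2 (A B : Alg L ar) : Alg L ar where
  carrier := A.carrier × B.carrier
  op f args := (A.op f fun i => (args i).1, B.op f fun i => (args i).2)

/-- The algebra structure on a subset closed under the operations. -/
def subAlg (A : Alg L ar) (S : Set A.carrier) (h : A.ClosedUnder S) : Alg L ar where
  carrier := S
  op f args := ⟨A.op f fun i => (args i).1, h f _ fun i => (args i).2⟩

/-- An algebra is `k`-generated if some `k` elements generate it. -/
def KGen (k : ℕ) (A : Alg L ar) : Prop :=
  ∃ g : Fin k → A.carrier, ∀ x, Closure A (Set.range g) x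

/-- A variety: a class of algebras closed under subalgebras, homomorphic
images and products. -/
def IsVariety (V : Alg L ar → Prop) : Prop :=
  (∀ (A : Alg L ar) (S : Set A.carrier) (h : A.ClosedUnder S), V A → V (A.subAlg S h)) ∧
  (∀ (A B : Alg L ar) (f : Hom A B), V A → Function.Surjective f.toFun → V B) ∧
  (∀ (ι : Type) (A : ι → Alg L ar), (∀ i, V (A i)) → V (prodAlg ι A))

end Alg

namespace Alg

variable {L : Type} {ar : L → ℕ}

theorem closure_closedUnder (A : Alg L ar) (S : Set A.carrier) :
    A.ClosedUnder {x | Closure A S x} := fun f args h => Closure.op f args h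

theorem closure_minimal {A : Alg L ar} {S T : Set A.carrier} (hT : A.ClosedUnder T)
    (hST : S ⊆ T) : ∀ x, Closure A S x → x ∈ T := by
  intro x hx
  induction hx with
  | base h => exact hST h
  | op f args h ih => exact hT f args ih

theorem closure_map {A B : Alg L ar} (h : Hom A B) {S : Set A.carrier} {x : A.carrier}
    (hx : Closure A S x) : Closure B (h.toFun '' S) (h.toFun x) := by
  induction hx with
  | base hs => exact Closure.base ⟨_, hs, rfl⟩
  | op f args _ ih => rw [h.map_op]; exact Closure.op f _ ih

/-- The subalgebra generated by the range of `g` is `k`-generated. -/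
theorem kgen_closure_subAlg (A : Alg L ar) {k : ℕ} (g : Fin k → A.carrier) :
    KGen k (A.subAlg {x | Closure A (Set.range g) x} (closure_closedUnder A _)) := by
  set C : Set A.carrier := {x | Closure A (Set.range g) x} with hC
  refine ⟨fun j => ⟨g j, Closure.base ⟨j, rfl⟩⟩, ?_⟩
  have key : ∀ x, Closure A (Set.range g) x → ∀ hx : x ∈ C,
      Closure (A.subAlg C (closure_closedUnder A _))
        (Set.range fun j => (⟨g j, Closure.base ⟨j, rfl⟩⟩ : C)) ⟨x, hx⟩ := by
    intro x hx
    induction hx with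
    | base h =>
      intro hx'
      obtain ⟨j, rfl⟩ := h
      exact Closure.base ⟨j, rfl⟩
    | op f args h ih =>
      intro hx'
      have : (⟨A.op f args, hx'⟩ : C)
          = (A.subAlg C (closure_closedUnder A _)).op f (fun i => ⟨args i, h i⟩) :=
        Subtype.ext rfl
      rw [this]
      exact Closure.op f _ (fun i => ih i (h i))
  rintro ⟨x, hx⟩
  exact key x hx hx

/-- Transport an algebra structure along an equivalence of carriers. -/
def transport (A : Alg L ar) {β : Type} (e : A.carrier ≃ β) : Alg L ar where
  carrier := β
  op f args := e (A.op f fun i => e.symm (args i))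

def transportHom (A : Alg L ar) {β : Type} (e : A.carrier ≃ β) : Hom A (A.transport e) where
  toFun := e
  map_op f args := by
    show e (A.op f args) = e (A.op f fun i => e.symm (e (args i)))
    simp

theorem transport_iso (A : Alg L ar) {β : Type} (e : A.carrier ≃ β) :
    Iso A (A.transport e) :=
  ⟨e, (transportHom A e).map_op⟩

theorem kgen_transport {A : Alg L ar} {β : Type} (e : A.carrier ≃ β) {k : ℕ}
    (g : Fin k → A.carrier) (hg : ∀ x, Closure A (Set.range g) x) :
    ∀ x, Closure (A.transport e) (Set.range (fun j => e (g j))) x := by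
  intro x
  have := closure_map (transportHom A e) (hg (e.symm x))
  simp only [transportHom] at this
  erw [Equiv.apply_symm_apply] at this
  have hrange : e '' Set.range g = Set.range fun j => e (g j) := by
    rw [← Set.range_comp]; rfl
  erw [hrange] at this
  exact this

end Alg

open Alg in
/-- For a finite signature, if every `k`-generated algebra in a variety `V` is
finite, then there is a uniform bound `N` on the cardinality of `k`-generated
algebras in `V`, and `V` contains only finitely many `k`-generated algebras up
to isomorphism. -/
theorem variety_kFinite_bound {L : Type} {ar : L → ℕ} [Finite L]
    (V : Alg L ar → Prop) (hV : IsVariety V) (k : ℕ)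
    (hfin : ∀ A : Alg L ar, V A → KGen k A → Finite A.carrier) :
    (∃ N : ℕ, ∀ A : Alg L ar, V A → KGen k A → Nat.card A.carrier ≤ N) ∧
    (∃ (m : ℕ) (R : Fin m → Alg L ar),
      ∀ A : Alg L ar, V A → KGen k A → ∃ i, Iso A (R i)) := by
  classical
  -- the index type: all algebras on `Fin n` in `V` together with a generating tuple
  let mk : (Σ n : ℕ, ((∀ f : L, (Fin (ar f) → Fin n) → Fin n) × (Fin k → Fin n))) → Alg L ar :=
    fun p => ⟨Fin p.1, p.2.1⟩
  let ι := { p : Σ n : ℕ, ((∀ f : L, (Fin (ar f) → Fin n) → Fin n) × (Fin k → Fin n)) //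
      V (mk p) ∧ ∀ x, Closure (mk p) (Set.range p.2.2) x }
  let P : Alg L ar := prodAlg ι (fun i => mk i.1)
  let g : Fin k → P.carrier := fun j i => i.1.2.2 j
  let C : Set P.carrier := {x | Closure P (Set.range g) x}
  let F : Alg L ar := P.subAlg C (closure_closedUnder P _)
  have hVP : V P := hV.2.2 ι _ (fun i => i.2.1)
  have hVF : V F := hV.1 P C _ hVP
  have hKF : KGen k F := kgen_closure_subAlg P g
  have hFfin : Finite F.carrier := hfin F hVF hKF
  set N := Nat.card F.carrier with hN
  -- key step: every k-generated algebra in V embeds (via a surjection from F) as one of the indices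
  have key : ∀ A : Alg L ar, V A → KGen k A →
      ∃ (n : ℕ) (s : ∀ f : L, (Fin (ar f) → Fin n) → Fin n),
        Nat.card A.carrier = n ∧ n ≤ N ∧ Iso A (⟨Fin n, s⟩ : Alg L ar) := by
    intro A hVA hKA
    obtain ⟨gA, hgA⟩ := hKA
    have hAfin : Finite A.carrier := hfin A hVA ⟨gA, hgA⟩
    obtain ⟨n, ⟨e⟩⟩ := Finite.exists_equiv_fin A.carrier
    have hcard : Nat.card A.carrier = n := by
      rw [Nat.card_eq_of_equiv_fin e]
    let A' : Alg L ar := A.transport e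
    have hVA' : V A' := hV.2.1 A A' (transportHom A e) hVA e.surjective
    have hgen' : ∀ x, Closure A' (Set.range (fun j => e (gA j))) x := kgen_transport e gA hgA
    -- package as an index
    let p : Σ n : ℕ, ((∀ f : L, (Fin (ar f) → Fin n) → Fin n) × (Fin k → Fin n)) :=
      ⟨n, A'.op, fun j => e (gA j)⟩
    have hmk : mk p = A' := rfl
    let i : ι := ⟨p, ⟨hVA', hgen'⟩⟩
    -- projection homomorphism from F onto the i-th factor
    let π : Hom F (mk p) := ⟨fun x => x.1 i, fun f args => rfl⟩
    have hsurj : Function.Surjective π.toFun := by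
      intro b
      have hT : (mk p).ClosedUnder (Set.range π.toFun) := by
        intro f bs hbs
        choose a ha using hbs
        have : bs = fun j => π.toFun (a j) := funext fun j => (ha j).symm
        rw [this]
        exact ⟨F.op f a, rfl⟩
      have hsub : Set.range p.2.2 ⊆ Set.range π.toFun := by
        rintro _ ⟨j, rfl⟩
        exact ⟨⟨g j, Closure.base ⟨j, rfl⟩⟩, rfl⟩
      exact closure_minimal hT hsub b (i.2.2 b)
    have hle : n ≤ N := by
      have := Nat.card_le_card_of_surjective π.toFun hsurj
      have h3 : Nat.card (mk p).carrier = n := Nat.card_fin n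
      rw [h3] at this
      exact this
    exact ⟨n, A'.op, hcard, hle, transport_iso A e⟩
  constructor
  · exact ⟨N, fun A hVA hKA => by
      obtain ⟨n, s, hcard, hle, _⟩ := key A hVA hKA
      omega⟩
  · -- finitely many representatives: all algebras on `Fin n`, `n ≤ N`
    let RepIdx := Σ n : Fin (N + 1), ∀ f : L, (Fin (ar f) → Fin (n : ℕ)) → Fin (n : ℕ)
    have : Finite RepIdx := by infer_instance
    obtain ⟨m, ⟨ev⟩⟩ := Finite.exists_equiv_fin RepIdx
    refine ⟨m, fun j => ⟨Fin ((ev.symm j).1 : ℕ), (ev.symm j).2⟩, ?_⟩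
    intro A hVA hKA
    obtain ⟨n, s, hcard, hle, hiso⟩ := key A hVA hKA
    have hn : n < N + 1 := Nat.lt_succ_of_le hle
    refine ⟨ev ⟨⟨n, hn⟩, s⟩, ?_⟩
    have h2 : ev.symm (ev ⟨⟨n, hn⟩, s⟩) = ⟨⟨n, hn⟩, s⟩ := ev.symm_apply_apply _
    show A.Iso ⟨Fin ((ev.symm (ev ⟨⟨n, hn⟩, s⟩)).1 : ℕ), (ev.symm (ev ⟨⟨n, hn⟩, s⟩)).2⟩
    rw [h2]
    exact hiso
end
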